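/- Let d ≥ 1, s > 0, μ ≥ 0, and f ∈ L²(𝕋^d;ℂ) with f̂_0 = 0 and |f|_μ < ∞, and let u be the solution of (−Δ)^s u = f, i.e. û_k = |k|^{−2s} f̂_k for k ≠ 0 and û_0 = 0. Let n ≥ 2 be even, let f_n = P_n f, and let u_n = (2π)^{−d} Σ_{k∈Z_n^d, k≠0} |k|^{−2s} (f_n)∧_k φ^k be the solution of the discrete problem (−Δ)^s u_n = f_n. Then |u − u_n|_s ≤ (n/2)^{−(μ+s)} |f|_μ. -/

import Mathlib

open MeasureTheory Real

noncomputable section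

/-- Fundamental domain `(0, 2π]^d` of the `d`-dimensional torus `𝕋^d = (ℝ/2πℤ)^d`. -/
def Box (d : ℕ) : Set (Fin d → ℝ) := Set.univ.pi fun _ => Set.Ioc 0 (2 * π)

/-- Lebesgue measure on the torus, realized on the fundamental domain. -/
def tMeas (d : ℕ) : Measure (Fin d → ℝ) := MeasureTheory.volume.restrict (Box d)

/-- The character `φ^k(x) = e^{i k·x}`. -/
def phi (d : ℕ) (k : Fin d → ℤ) (x : Fin d → ℝ) : ℂ :=
  Complex.exp (Complex.I * ∑ i, (k i : ℂ) * (x i : ℂ))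

/-- Fourier coefficient `v̂_k = ∫_{𝕋^d} v(x) e^{-i k·x} dx`. -/
def fc (d : ℕ) (v : (Fin d → ℝ) → ℂ) (k : Fin d → ℤ) : ℂ :=
  ∫ x, v x * Complex.exp (-(Complex.I * ∑ i, (k i : ℂ) * (x i : ℂ))) ∂(tMeas d)

/-- Euclidean norm `|k|` of a frequency vector `k ∈ ℤ^d`. -/
def knorm (d : ℕ) (k : Fin d → ℤ) : ℝ := Real.sqrt (∑ i, ((k i : ℝ)) ^ 2)

/-- Summand family `|k|^{2μ}|c_k|²`, `k ≠ 0`, of the squared Sobolev seminorm of a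
coefficient sequence. -/
def sobFamC (d : ℕ) (μ : ℝ) (c : (Fin d → ℤ) → ℂ) :
    {k : Fin d → ℤ // k ≠ 0} → ℝ :=
  fun k => knorm d k.1 ^ (2 * μ) * ‖c k.1‖ ^ 2

/-- Summand family of the squared Sobolev seminorm `|v|_μ²`. -/
def sobFam (d : ℕ) (μ : ℝ) (v : (Fin d → ℝ) → ℂ) := sobFamC d μ (fc d v)

/-- Sobolev seminorm of order `μ` of a coefficient sequence. -/
def sobNormC (d : ℕ) (μ : ℝ) (c : (Fin d → ℤ) → ℂ) : ℝ :=
  Real.sqrt (∑' k, sobFamC d μ c k)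

/-- Sobolev seminorm `|v|_μ = (Σ_{k≠0} |k|^{2μ}|v̂_k|²)^{1/2}`. -/
def sobNorm (d : ℕ) (μ : ℝ) (v : (Fin d → ℝ) → ℂ) : ℝ := sobNormC d μ (fc d v)

/-- Frequency set `Z_n^d = {k : -n/2 ≤ k_i ≤ n/2 - 1}`. -/
def Znd (d n : ℕ) : Finset (Fin d → ℤ) :=
  Fintype.piFinset fun _ => Finset.Icc (-((n : ℤ) / 2)) ((n : ℤ) / 2 - 1)

/-- Space `S_n` of trigonometric polynomials with frequencies in `Z_n^d`. -/
def Sn (d n : ℕ) : Set ((Fin d → ℝ) → ℂ) :=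
  {v | ∃ c : (Fin d → ℤ) → ℂ, v = fun x => ∑ k ∈ Znd d n, c k * phi d k x}

/-- L² projection `P_n v = (2π)^{-d} Σ_{k ∈ Z_n^d} v̂_k φ^k`. -/
def Pn (d n : ℕ) (v : (Fin d → ℝ) → ℂ) : (Fin d → ℝ) → ℂ :=
  fun x => (((2 * π) ^ d : ℝ))⁻¹ • ∑ k ∈ Znd d n, fc d v k * phi d k x

/-- Index set `{0,…,n-1}^d` of the interpolation grid. -/
def gridIdx (d n : ℕ) : Finset (Fin d → ℕ) := Fintype.piFinset fun _ => Finset.range n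

/-- Grid point `x_j = (2π/n) j`. -/
def gridPt (d n : ℕ) (j : Fin d → ℕ) : Fin d → ℝ := fun i => 2 * π / (n : ℝ) * (j i : ℝ)

/-- Trigonometric polynomial with discrete Fourier coefficients
`c_k = n^{-d} Σ_j V_j e^{-i k·x_j}` built from grid values `V`. -/
def interpOfValues (d n : ℕ) (V : (Fin d → ℕ) → ℂ) : (Fin d → ℝ) → ℂ :=
  fun x => ∑ k ∈ Znd d n,
    (((n : ℂ) ^ d)⁻¹ * ∑ j ∈ gridIdx d n,
        V j * Complex.exp (-(Complex.I * ∑ i, (k i : ℂ) * (gridPt d n j i : ℂ)))) * phi d k x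

/-- Trigonometric interpolant `I_n v`. -/
def Interp (d n : ℕ) (v : (Fin d → ℝ) → ℂ) : (Fin d → ℝ) → ℂ :=
  interpOfValues d n fun j => v (gridPt d n j)

/-- Fractional Laplacian `(−Δ)^σ` realized on trigonometric polynomials in `S_n`. -/
def fLap (d n : ℕ) (σ : ℝ) (v : (Fin d → ℝ) → ℂ) : (Fin d → ℝ) → ℂ :=
  fun x => (((2 * π) ^ d : ℝ))⁻¹ •
    ∑ k ∈ (Znd d n).erase 0, (knorm d k ^ (2 * σ)) • (fc d v k * phi d k x)

/-- Membership in `H^μ(𝕋^d;ℂ)`: `v ∈ L²` with `|v|_μ < ∞`. -/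
def memH (d : ℕ) (μ : ℝ) (v : (Fin d → ℝ) → ℂ) : Prop :=
  MemLp v 2 (tMeas d) ∧ Summable (sobFam d μ v)

/-- Membership in `Ḣ^μ(𝕋^d;ℂ)`: additionally `v̂_0 = 0`. -/
def memHdot (d : ℕ) (μ : ℝ) (v : (Fin d → ℝ) → ℂ) : Prop :=
  memH d μ v ∧ fc d v 0 = 0

/-- Solution of a discrete spectral problem: given a Fourier multiplier `m` and data
`g`, returns `(2π)^{-d} Σ_{k ∈ Z_n^d, k ≠ 0} m(k) ĝ_k φ^k`. -/
def discSol (d n : ℕ) (m : (Fin d → ℤ) → ℝ) (g : (Fin d → ℝ) → ℂ) : (Fin d → ℝ) → ℂ :=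
  fun x => (((2 * π) ^ d : ℝ))⁻¹ • ∑ k ∈ (Znd d n).erase 0, m k • (fc d g k * phi d k x)


lemma int_exp_Ioc (m : ℤ) :
    ∫ x in Set.Ioc (0:ℝ) (2*π), Complex.exp (Complex.I * m * x) =
      if m = 0 then ((2*π : ℝ) : ℂ) else 0 := by
  rw [← intervalIntegral.integral_of_le (by positivity)]
  by_cases hm : m = 0
  · subst hm; simp
  · have hc : Complex.I * (m:ℂ) ≠ 0 :=
      mul_ne_zero Complex.I_ne_zero (by exact_mod_cast hm)
    rw [if_neg hm]
    have h1 : Complex.I * (m:ℂ) * ((2*π : ℝ):ℂ) = (m:ℂ) * (2*(π:ℂ)*Complex.I) := by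
      push_cast; ring
    rw [integral_exp_mul_complex hc, h1, Complex.exp_int_mul_two_pi_mul_I]
    simp

lemma box_meas (d : ℕ) : MeasurableSet (Box d) :=
  MeasurableSet.univ_pi fun _ => measurableSet_Ioc

lemma fc_phi (d : ℕ) (k l : Fin d → ℤ) :
    fc d (phi d k) l = if k = l then (((2*π)^d : ℝ) : ℂ) else 0 := by
  have hint : (fun x : Fin d → ℝ => phi d k x *
      Complex.exp (-(Complex.I * ∑ i, (l i : ℂ) * (x i : ℂ)))) =
      fun x => ∏ i, Complex.exp (Complex.I * ((k i : ℤ) - l i : ℤ) * (x i : ℂ)) := by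
    funext x
    rw [phi, ← Complex.exp_add, ← Complex.exp_sum]
    congr 1
    push_cast
    rw [← sub_eq_add_neg, Finset.mul_sum, Finset.mul_sum, ← Finset.sum_sub_distrib]
    exact Finset.sum_congr rfl fun i _ => by ring
  rw [fc, hint, tMeas, ← integral_indicator (box_meas d)]
  have hind : (fun x : Fin d → ℝ => (Box d).indicator
      (fun x => ∏ i, Complex.exp (Complex.I * ((k i : ℤ) - l i : ℤ) * (x i : ℂ))) x) =
      fun x : Fin d → ℝ => ∏ i,
        (Set.Ioc (0:ℝ) (2*π)).indicator
          (fun t : ℝ => Complex.exp (Complex.I * ((k i : ℤ) - l i : ℤ) * (t : ℂ))) (x i) := by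
    funext x
    by_cases hx : x ∈ Box d
    · rw [Set.indicator_of_mem hx]
      have : ∀ i, x i ∈ Set.Ioc (0:ℝ) (2*π) := fun i => hx i (Set.mem_univ i)
      exact (Finset.prod_congr rfl fun i _ => (Set.indicator_of_mem (this i)
        (fun t : ℝ => Complex.exp (Complex.I * ((k i : ℤ) - l i : ℤ) * (t : ℂ)))).symm)
    · rw [Set.indicator_of_notMem hx]
      have hex : ∃ i, x i ∉ Set.Ioc (0:ℝ) (2*π) := by
        by_contra h; push_neg at h; exact hx fun i _ => h i
      obtain ⟨i, hi⟩ := hex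
      exact (Finset.prod_eq_zero (Finset.mem_univ i) (Set.indicator_of_notMem hi _)).symm
  rw [hind, MeasureTheory.integral_fintype_prod_volume_eq_prod
    (fun i t => (Set.Ioc (0:ℝ) (2*π)).indicator
      (fun t : ℝ => Complex.exp (Complex.I * ((k i : ℤ) - l i : ℤ) * (t : ℂ))) t)]
  have hfac : ∀ i, (∫ t : ℝ, (Set.Ioc (0:ℝ) (2*π)).indicator
      (fun t : ℝ => Complex.exp (Complex.I * ((k i : ℤ) - l i : ℤ) * (t : ℂ))) t) =
      if k i = l i then ((2*π : ℝ) : ℂ) else 0 := by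
    intro i
    rw [integral_indicator measurableSet_Ioc, int_exp_Ioc (k i - l i)]
    simp [sub_eq_zero]
  simp_rw [hfac]
  by_cases hkl : k = l
  · subst hkl
    simp [Finset.prod_const]
  · rw [if_neg hkl]
    obtain ⟨i, hi⟩ : ∃ i, k i ≠ l i := by
      by_contra h; push_neg at h; exact hkl (funext h)
    exact Finset.prod_eq_zero (Finset.mem_univ i) (if_neg hi)

instance tMeas_finite (d : ℕ) : IsFiniteMeasure (tMeas d) := by
  constructor
  rw [tMeas, Measure.restrict_apply_univ, Box, volume_pi_pi]
  simp only [Real.volume_Ioc, Finset.prod_const]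
  exact ENNReal.pow_lt_top ENNReal.ofReal_lt_top

lemma sum_cast (d : ℕ) (k : Fin d → ℤ) (x : Fin d → ℝ) :
    ∑ i, (k i : ℂ) * (x i : ℂ) = (((∑ i, (k i : ℝ) * x i) : ℝ) : ℂ) := by
  push_cast; ring

lemma norm_exp_I_mul (r : ℝ) : ‖Complex.exp (Complex.I * r)‖ = 1 := by
  rw [mul_comm]; exact Complex.norm_exp_ofReal_mul_I r

lemma norm_exp_neg_I_mul (r : ℝ) : ‖Complex.exp (-(Complex.I * r))‖ = 1 := by
  rw [show -(Complex.I * (r:ℂ)) = Complex.I * ((-r : ℝ) : ℂ) by push_cast; ring]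
  exact norm_exp_I_mul _

lemma norm_phi (d : ℕ) (k : Fin d → ℤ) (x : Fin d → ℝ) : ‖phi d k x‖ = 1 := by
  rw [phi, sum_cast]; exact norm_exp_I_mul _

lemma cont_aux (d : ℕ) (k : Fin d → ℤ) :
    Continuous fun x : Fin d → ℝ => (∑ i, (k i : ℂ) * (x i : ℂ)) := by
  exact continuous_finset_sum _ fun i _ =>
    continuous_const.mul (Complex.continuous_ofReal.comp (continuous_apply i))

lemma cont_phi (d : ℕ) (k : Fin d → ℤ) : Continuous (phi d k) :=
  Complex.continuous_exp.comp (continuous_const.mul (cont_aux d k))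

lemma cont_e (d : ℕ) (k : Fin d → ℤ) :
    Continuous fun x : Fin d → ℝ =>
      Complex.exp (-(Complex.I * ∑ i, (k i : ℂ) * (x i : ℂ))) :=
  Complex.continuous_exp.comp (continuous_const.mul (cont_aux d k)).neg

lemma integrable_phi (d : ℕ) (k : Fin d → ℤ) : Integrable (phi d k) (tMeas d) := by
  refine (integrable_const (1:ℝ)).mono' (cont_phi d k).aestronglyMeasurable ?_
  exact Filter.Eventually.of_forall fun x => by rw [norm_phi]

lemma integrable_mul_exp (d : ℕ) {v : (Fin d → ℝ) → ℂ} (hv : Integrable v (tMeas d))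
    (l : Fin d → ℤ) :
    Integrable (fun x => v x *
      Complex.exp (-(Complex.I * ∑ i, (l i : ℂ) * (x i : ℂ)))) (tMeas d) := by
  refine hv.norm.mono' (hv.1.mul (cont_e d l).aestronglyMeasurable) ?_
  refine Filter.Eventually.of_forall fun x => ?_
  rw [norm_mul, sum_cast, norm_exp_neg_I_mul, mul_one]

lemma fc_trig (d : ℕ) (F : Finset (Fin d → ℤ)) (c : (Fin d → ℤ) → ℂ) (l : Fin d → ℤ) :
    fc d (fun x => ∑ k ∈ F, c k * phi d k x) l =
      if l ∈ F then (((2*π)^d : ℝ) : ℂ) * c l else 0 := by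
  rw [fc]
  have : (fun x : Fin d → ℝ => (∑ k ∈ F, c k * phi d k x) *
      Complex.exp (-(Complex.I * ∑ i, (l i : ℂ) * (x i : ℂ)))) =
      fun x => ∑ k ∈ F, c k * (phi d k x *
        Complex.exp (-(Complex.I * ∑ i, (l i : ℂ) * (x i : ℂ)))) := by
    funext x; rw [Finset.sum_mul]; exact Finset.sum_congr rfl fun k _ => by ring
  rw [this, integral_finset_sum F fun k _ =>
    (integrable_mul_exp d (integrable_phi d k) l).const_mul (c k)]
  have : ∀ k ∈ F, (∫ x, c k * (phi d k x *
      Complex.exp (-(Complex.I * ∑ i, (l i : ℂ) * (x i : ℂ)))) ∂(tMeas d)) =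
      if k = l then (((2*π)^d : ℝ) : ℂ) * c k else 0 := by
    intro k _
    rw [integral_const_mul, ← fc, fc_phi]
    by_cases h : k = l <;> simp [h, mul_comm]
  rw [Finset.sum_congr rfl this, Finset.sum_ite_eq' F l
    (fun k => (((2*π)^d : ℝ) : ℂ) * c k)]

lemma fc_smul (d : ℕ) (r : ℝ) (g : (Fin d → ℝ) → ℂ) (l : Fin d → ℤ) :
    fc d (fun x => r • g x) l = r • fc d g l := by
  rw [fc, fc]; simp_rw [smul_mul_assoc]; rw [integral_smul]

lemma smul_cancel (d : ℕ) (z : ℂ) :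
    (((2*π)^d : ℝ))⁻¹ • ((((2*π)^d : ℝ) : ℂ) * z) = z := by
  rw [Complex.real_smul, ← mul_assoc, ← Complex.ofReal_mul,
    inv_mul_cancel₀ (by positivity), Complex.ofReal_one, one_mul]

lemma fc_Pn (d n : ℕ) (f : (Fin d → ℝ) → ℂ) (l : Fin d → ℤ) :
    fc d (Pn d n f) l = if l ∈ Znd d n then fc d f l else 0 := by
  rw [show Pn d n f = fun x => (((2*π)^d : ℝ))⁻¹ •
    ((fun y => ∑ k ∈ Znd d n, fc d f k * phi d k y) x) from rfl, fc_smul, fc_trig]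
  by_cases hl : l ∈ Znd d n
  · rw [if_pos hl, if_pos hl, smul_cancel]
  · rw [if_neg hl, if_neg hl, smul_zero]

lemma fc_discSol (d n : ℕ) (m : (Fin d → ℤ) → ℝ) (g : (Fin d → ℝ) → ℂ) (l : Fin d → ℤ) :
    fc d (discSol d n m g) l =
      if l ∈ (Znd d n).erase 0 then (m l : ℂ) * fc d g l else 0 := by
  have h : discSol d n m g = fun x => (((2*π)^d : ℝ))⁻¹ •
      ((fun y => ∑ k ∈ (Znd d n).erase 0, ((m k : ℂ) * fc d g k) * phi d k y) x) := by
    funext x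
    rw [discSol]
    congr 1
    exact Finset.sum_congr rfl fun k _ => by rw [Complex.real_smul]; ring
  rw [h, fc_smul, fc_trig]
  by_cases hl : l ∈ (Znd d n).erase 0
  · rw [if_pos hl, if_pos hl, smul_cancel]
  · rw [if_neg hl, if_neg hl, smul_zero]

lemma knorm_pos {d : ℕ} {k : Fin d → ℤ} (hk : k ≠ 0) : 0 < knorm d k := by
  obtain ⟨i, hi⟩ : ∃ i, k i ≠ 0 := by
    by_contra h; push_neg at h; exact hk (funext h)
  have h1 : (k i : ℝ) ≠ 0 := Int.cast_ne_zero.mpr hi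
  exact Real.sqrt_pos.mpr (Finset.sum_pos' (fun j _ => sq_nonneg _)
    ⟨i, Finset.mem_univ i, by positivity⟩)

lemma knorm_ge {d n : ℕ} (hne : Even n) {k : Fin d → ℤ} (hk : k ∉ Znd d n) :
    (n : ℝ) / 2 ≤ knorm d k := by
  obtain ⟨r, hr⟩ := hne
  have hr2 : ((n : ℤ) / 2) = (r : ℤ) := by omega
  simp only [Znd, Fintype.mem_piFinset, not_forall] at hk
  obtain ⟨i, hi⟩ := hk
  rw [Finset.mem_Icc, not_and_or, not_le, not_le, hr2] at hi
  have habs : (r : ℤ) ≤ |k i| := by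
    rcases hi with h | h
    · exact le_abs.mpr (Or.inr (by omega))
    · exact le_abs.mpr (Or.inl (by omega))
  have hreal : (r : ℝ) ≤ |(k i : ℝ)| := by exact_mod_cast habs
  calc (n : ℝ) / 2 = (r : ℝ) := by rw [hr]; push_cast; ring
    _ ≤ |(k i : ℝ)| := hreal
    _ = Real.sqrt ((k i : ℝ) ^ 2) := (Real.sqrt_sq_eq_abs _).symm
    _ ≤ knorm d k := Real.sqrt_le_sqrt
        (Finset.single_le_sum (fun j _ => sq_nonneg ((k j : ℝ))) (Finset.mem_univ i))

lemma integrable_of_L2 {d : ℕ} {v : (Fin d → ℝ) → ℂ} (hv : MemLp v 2 (tMeas d)) :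
    Integrable v (tMeas d) :=
  memLp_one_iff_integrable.mp (hv.mono_exponent (by norm_num))

lemma integrable_discSol (d n : ℕ) (m : (Fin d → ℤ) → ℝ) (g : (Fin d → ℝ) → ℂ) :
    Integrable (discSol d n m g) (tMeas d) := by
  have hS : Integrable
      (fun x => ∑ k ∈ (Znd d n).erase 0, m k • (fc d g k * phi d k x)) (tMeas d) :=
    integrable_finset_sum _ fun k _ =>
      Integrable.smul (m k) ((integrable_phi d k).const_mul (fc d g k))
  exact Integrable.smul ((((2 * π) ^ d : ℝ))⁻¹) hS

lemma knorm_nonneg (d : ℕ) (k : Fin d → ℤ) : 0 ≤ knorm d k := Real.sqrt_nonneg _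

/-- error estimate `|u - u_n|_s ≤ (n/2)^{-(μ+s)} |f|_μ` for the spectral
approximation of the fractional Poisson problem with projected data `f_n = P_n f`. -/
theorem fractional_poisson_projection_error (d n : ℕ) (hd : 1 ≤ d) (hn : 2 ≤ n)
    (hne : Even n) (s mu : ℝ) (hs : 0 < s) (hmu : 0 ≤ mu)
    (f : (Fin d → ℝ) → ℂ) (hf : MemLp f 2 (tMeas d)) (hf0 : fc d f 0 = 0)
    (hfmu : Summable (sobFam d mu f))
    (u : (Fin d → ℝ) → ℂ) (hu : MemLp u 2 (tMeas d)) (hu0 : fc d u 0 = 0)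
    (huk : ∀ k : Fin d → ℤ, k ≠ 0 →
      fc d u k = ((knorm d k ^ (-(2 * s)) : ℝ) : ℂ) * fc d f k) :
    sobNorm d s
        (fun x => u x - discSol d n (fun k => knorm d k ^ (-(2 * s))) (Pn d n f) x) ≤
      ((n : ℝ) / 2) ^ (-(mu + s)) * sobNorm d mu f := by
  set mfun : (Fin d → ℤ) → ℝ := fun k => knorm d k ^ (-(2 * s)) with hm
  set uN := discSol d n mfun (Pn d n f) with huNdef
  have hint_u : Integrable u (tMeas d) := integrable_of_L2 hu
  have hint_uN : Integrable uN (tMeas d) := integrable_discSol d n mfun (Pn d n f)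
  have hfc_err : ∀ l : Fin d → ℤ,
      fc d (fun x => u x - uN x) l = fc d u l - fc d uN l := by
    intro l
    rw [fc, fc, fc, ← integral_sub (integrable_mul_exp d hint_u l)
      (integrable_mul_exp d hint_uN l)]
    congr 1; funext x; ring
  have hfc_uN : ∀ l, fc d uN l =
      if l ∈ (Znd d n).erase 0 then (mfun l : ℂ) * fc d f l else 0 := by
    intro l
    rw [huNdef, fc_discSol]
    by_cases hl : l ∈ (Znd d n).erase 0
    · rw [if_pos hl, if_pos hl, fc_Pn, if_pos (Finset.mem_of_mem_erase hl)]
    · rw [if_neg hl, if_neg hl]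
  set C := ((n : ℝ) / 2) ^ (-(mu + s)) with hC
  have hn2 : 0 < (n : ℝ) / 2 := by positivity
  have hC0 : 0 ≤ C := Real.rpow_nonneg hn2.le _
  have hC2 : C ^ 2 = ((n : ℝ) / 2) ^ (-(2 * (mu + s))) := by
    rw [hC, ← Real.rpow_natCast (((n : ℝ) / 2) ^ (-(mu + s))) 2, ← Real.rpow_mul hn2.le]
    congr 1; push_cast; ring
  have key : ∀ k : {k : Fin d → ℤ // k ≠ 0},
      sobFam d s (fun x => u x - uN x) k ≤ C ^ 2 * sobFam d mu f k := by
    intro kk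
    obtain ⟨k, hk⟩ := kk
    simp only [sobFam, sobFamC]
    by_cases hkZ : k ∈ Znd d n
    · have hz : fc d (fun x => u x - uN x) k = 0 := by
        rw [hfc_err, hfc_uN, if_pos (Finset.mem_erase.mpr ⟨hk, hkZ⟩), huk k hk]
        simp only [hm]
        ring
      rw [hz]
      have h1 : 0 ≤ knorm d k ^ (2 * mu) * ‖fc d f k‖ ^ 2 :=
        mul_nonneg (Real.rpow_nonneg (knorm_nonneg d k) _) (sq_nonneg _)
      simp only [norm_zero]
      rw [zero_pow (by norm_num : (2:ℕ) ≠ 0), mul_zero]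
      exact mul_nonneg (sq_nonneg C) h1
    · have h1 : fc d (fun x => u x - uN x) k =
          ((knorm d k ^ (-(2 * s)) : ℝ) : ℂ) * fc d f k := by
        rw [hfc_err, hfc_uN, if_neg (fun h => hkZ (Finset.mem_of_mem_erase h)),
          sub_zero, huk k hk]
      have hKpos : 0 < knorm d k := knorm_pos hk
      have hKge : (n : ℝ) / 2 ≤ knorm d k := knorm_ge hne hkZ
      rw [h1, norm_mul, Complex.norm_real, Real.norm_eq_abs,
        abs_of_nonneg (Real.rpow_nonneg hKpos.le _), mul_pow]
      have harith : knorm d k ^ (2 * s) *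
          ((knorm d k ^ (-(2 * s))) ^ 2 * ‖fc d f k‖ ^ 2) =
          (knorm d k ^ (-(2 * (mu + s)))) *
            (knorm d k ^ (2 * mu) * ‖fc d f k‖ ^ 2) := by
        rw [← Real.rpow_natCast (knorm d k ^ (-(2 * s))) 2, ← Real.rpow_mul hKpos.le,
          ← mul_assoc, ← Real.rpow_add hKpos, ← mul_assoc, ← Real.rpow_add hKpos]
        congr 2
        push_cast; ring
      rw [harith, hC2]
      refine mul_le_mul_of_nonneg_right ?_
        (mul_nonneg (Real.rpow_nonneg (knorm_nonneg d k) _) (sq_nonneg _))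
      rw [Real.rpow_neg hKpos.le, Real.rpow_neg hn2.le]
      exact inv_anti₀ (Real.rpow_pos_of_pos hn2 _)
        (Real.rpow_le_rpow hn2.le hKge (by positivity))
  have hnn : ∀ k, 0 ≤ sobFam d s (fun x => u x - uN x) k := fun k => by
    simp only [sobFam, sobFamC]
    exact mul_nonneg (Real.rpow_nonneg (knorm_nonneg d k.1) _) (sq_nonneg _)
  have hsumE : Summable (sobFam d s (fun x => u x - uN x)) :=
    Summable.of_nonneg_of_le hnn key (hfmu.mul_left _)
  have htsum : (∑' k, sobFam d s (fun x => u x - uN x) k) ≤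
      C ^ 2 * ∑' k, sobFam d mu f k := by
    rw [← tsum_mul_left]
    exact Summable.tsum_le_tsum key hsumE (hfmu.mul_left _)
  have hfinal : sobNorm d s (fun x => u x - uN x) ≤ C * sobNorm d mu f := by
    rw [sobNorm, sobNorm, sobNormC, sobNormC]
    calc Real.sqrt (∑' k, sobFamC d s (fc d (fun x => u x - uN x)) k)
        ≤ Real.sqrt (C ^ 2 * ∑' k, sobFamC d mu (fc d f) k) :=
          Real.sqrt_le_sqrt htsum
      _ = C * Real.sqrt (∑' k, sobFamC d mu (fc d f) k) := by
          rw [Real.sqrt_mul (sq_nonneg C), Real.sqrt_sq hC0]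
  exact hfinal
end
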